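/- arXiv:1606.06570 — 2 statements merged into one kernel-verified Lean document; each statement's English description precedes it below -/
import Mathlib

section
/- The hierarchy for circuits with only simple registers collapses: for all r ∈ N, Fun_S^r = Fun_S^1. -/
set_option linter.unusedVariables false

attribute [local instance] Classical.propDecidable

/-- Signal values: stable `zero`, `one`, and metastable `meta`. -/
inductive BM : Type
  | zero
  | one
  | metastable
  deriving DecidableEq

/-- Embedding of stable Boolean values into `BM`. -/
def BM.ofBool : Bool → BM
  | false => BM.zero
  | true => BM.one

/-- `inResM x y` means `y ∈ ResM(x)`, the set of partial resolutions of `x`. -/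
def inResM {k : ℕ} (x y : Fin k → BM) : Prop :=
  ∀ i, x i = y i ∨ x i = BM.metastable

/-- `inRes x y` means `y ∈ Res(x)`, i.e. `y` is a complete (stable) resolution of `x`. -/
def inRes {k : ℕ} (x y : Fin k → BM) : Prop :=
  inResM x y ∧ ∀ i, y i ≠ BM.metastable

/-- The complete resolutions of `x`, viewed as Boolean words. -/
def boolRes {k : ℕ} (x : Fin k → BM) : Set (Fin k → Bool) :=
  { z | ∀ i, x i = BM.ofBool (z i) ∨ x i = BM.metastable }

/-- The metastable (Kleene) extension `f_M : BM^k → BM` of a Boolean function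
`f : B^k → B`: it outputs a stable value `b` iff all complete resolutions of the
input evaluate to `b` under `f`, and `meta` otherwise. -/
noncomputable def kleene {k : ℕ} (f : (Fin k → Bool) → Bool) (x : Fin k → BM) : BM :=
  if ∀ z ∈ boolRes x, f z = false then BM.zero
  else if ∀ z ∈ boolRes x, f z = true then BM.one
  else BM.metastable

/-- Combinational logic with `m` input nodes: formulas built from inputs,
`BM`-constants (gates of indegree 0), and gates computing the metastable extension
of a Boolean function of their in-neighbors.  (A DAG evaluates exactly like the
formula obtained by unsharing, so this faithfully captures evaluation of
combinational logic DAGs.) -/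
inductive Comb (m : ℕ) : Type
  | input : Fin m → Comb m
  | const : BM → Comb m
  | gate : (j : ℕ) → ((Fin j → Bool) → Bool) → (Fin j → Comb m) → Comb m

/-- Recursive evaluation of combinational logic on input `x ∈ BM^m`. -/
noncomputable def Comb.eval {m : ℕ} (x : Fin m → BM) : Comb m → BM
  | .input i => x i
  | .const b => b
  | .gate _ f cs => kleene f (fun t => (cs t).eval x)

/-- Register types: simple, mask-0, mask-1. -/
inductive RegType : Type
  | simple
  | mask0
  | mask1
  deriving DecidableEq

/-- `regRead t b (o, b')` holds iff a register of type `t` in state `b` can be read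
with read value `o`, moving to state `b'`:  a register in a stable state yields that
state and keeps it; a simple register in state `meta` yields `meta` and stays `meta`;
a mask-`c` register in state `meta` either yields `c` staying in state `meta`, or
yields `meta` changing its state to `1 - c`. -/
def regRead : RegType → BM → BM × BM → Prop
  | _, BM.zero, p => p = (BM.zero, BM.zero)
  | _, BM.one, p => p = (BM.one, BM.one)
  | RegType.simple, BM.metastable, p => p = (BM.metastable, BM.metastable)
  | RegType.mask0, BM.metastable, p => p = (BM.zero, BM.metastable) ∨ p = (BM.metastable, BM.one)
  | RegType.mask1, BM.metastable, p => p = (BM.one, BM.metastable) ∨ p = (BM.metastable, BM.zero)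

/-- A circuit with `m` input, `k` local and `n` output registers: a type for each
register, combinational logic with `m + k` input nodes (one per non-output register)
and `k + n` output nodes (one per non-input register), and an initialization of the
non-input registers. -/
structure Circuit (m k n : ℕ) : Type where
  inType : Fin m → RegType
  locType : Fin k → RegType
  outType : Fin n → RegType
  logic : Fin (k + n) → Comb (m + k)
  init : Fin (k + n) → BM

/-- A state of a circuit: values of input, local, and output registers. -/
structure CState (m k n : ℕ) : Type where
  inp : Fin m → BM
  loc : Fin k → BM
  out : Fin n → BM

/-- A state as a word in `BM^{m+k+n}`. -/
def CState.toVec {m k n : ℕ} (s : CState m k n) : Fin (m + (k + n)) → BM :=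
  Fin.append s.inp (Fin.append s.loc s.out)

/-- Read phase: `o ∈ BM^{m+k}` are possible read values of the non-output registers
in state `s`, and `ι'` the corresponding successor states of the input registers. -/
def ReadRel {m k n : ℕ} (C : Circuit m k n) (s : CState m k n)
    (o : Fin (m + k) → BM) (ι' : Fin m → BM) : Prop :=
  (∀ i : Fin m, regRead (C.inType i) (s.inp i) (o (Fin.castAdd k i), ι' i)) ∧
  (∀ j : Fin k, ∃ st', regRead (C.locType j) (s.loc j) (o (Fin.natAdd m j), st'))

/-- Evaluation phase: `f^G` applied to the read values. -/
noncomputable def evalLogic {m k n : ℕ} (C : Circuit m k n) (o : Fin (m + k) → BM) :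
    Fin (k + n) → BM :=
  fun j => (C.logic j).eval o

/-- `Write^C(s)`: possible values written to the non-input registers. -/
def WriteSet {m k n : ℕ} (C : Circuit m k n) (s : CState m k n) :
    Set (Fin (k + n) → BM) :=
  { w | ∃ o ι', ReadRel C s o ι' ∧ inResM (evalLogic C o) w }

/-- Successor-state relation: read all non-output registers, evaluate the logic,
and write an arbitrary partial resolution of the result to the non-input registers. -/
def Succ {m k n : ℕ} (C : Circuit m k n) (s s' : CState m k n) : Prop :=
  ∃ o ι', ReadRel C s o ι' ∧ s'.inp = ι' ∧
    inResM (evalLogic C o) (Fin.append s'.loc s'.out)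

/-- `reach C r s₀ = S^C_r(s₀)`: states reachable in `r` rounds from `s₀`. -/
def reach {m k n : ℕ} (C : Circuit m k n) : ℕ → CState m k n → Set (CState m k n)
  | 0, s => {s}
  | r + 1, s => { t | ∃ u ∈ reach C r s, Succ C u t }

/-- The initial state of `C` with input `ι`. -/
def initState {m k n : ℕ} (C : Circuit m k n) (ι : Fin m → BM) : CState m k n :=
  ⟨ι, fun j => C.init (Fin.castAdd n j), fun j => C.init (Fin.natAdd k j)⟩

/-- `C_r(ι)`: possible outputs after `r` rounds on input `ι`. -/
def Cout {m k n : ℕ} (C : Circuit m k n) (r : ℕ) (ι : Fin m → BM) :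
    Set (Fin n → BM) :=
  { y | ∃ s ∈ reach C r (initState C ι), y = s.out }

/-- `r` rounds of `C` implement `f` iff `C_r(ι) ⊆ f(ι)` for all inputs `ι`. -/
def Implements {m k n : ℕ} (C : Circuit m k n) (r : ℕ)
    (f : (Fin m → BM) → Set (Fin n → BM)) : Prop :=
  ∀ ι, Cout C r ι ⊆ f ι

/-- All registers of the circuit are simple. -/
def OnlySimple {m k n : ℕ} (C : Circuit m k n) : Prop :=
  (∀ i, C.inType i = RegType.simple) ∧ (∀ j, C.locType j = RegType.simple) ∧
    (∀ j, C.outType j = RegType.simple)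

/-- `Fun_S^r`: functions implementable by `r` rounds of circuits with only simple
registers. -/
def FunS (r m n : ℕ) : Set ((Fin m → BM) → Set (Fin n → BM)) :=
  { f | ∃ k, ∃ C : Circuit m k n, OnlySimple C ∧ Implements C r f }

/-- `Fun_M^r`: functions implementable by `r` rounds of circuits with arbitrary
register types. -/
def FunM (r m n : ℕ) : Set ((Fin m → BM) → Set (Fin n → BM)) :=
  { f | ∃ k, ∃ C : Circuit m k n, Implements C r f }

/-- A pivotal sequence over `BM^N`: consecutive elements differ in exactly one bit,
and that bit is `meta` in one of the two elements. -/
def PivotalSeq {N ℓ : ℕ} (x : Fin (ℓ + 1) → Fin N → BM) : Prop :=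
  ∀ i : Fin ℓ,
    ∃ j : Fin N,
      x i.castSucc j ≠ x i.succ j ∧
      (x i.castSucc j = BM.metastable ∨ x i.succ j = BM.metastable) ∧
      ∀ j' : Fin N, x i.castSucc j' ≠ x i.succ j' → j' = j

/-- A function `f : BM^m → Pow(BM^n)` is natural iff it is bit-wise and closed
(a product of component functions each taking values in `{{0}, {1}, BM}`)
and specific (stabilizing the input restricts the output). -/
def IsNatural {m n : ℕ} (f : (Fin m → BM) → Set (Fin n → BM)) : Prop :=
  (∃ g : Fin n → (Fin m → BM) → Set BM,
      (∀ i x, g i x = {BM.zero} ∨ g i x = {BM.one} ∨ g i x = (Set.univ : Set BM)) ∧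
      (∀ x, f x = { y | ∀ i, y i ∈ g i x })) ∧
  (∀ x y, inRes x y → f y ⊆ f x)

/-- The `i`-th component of the metastable closure of `f : B^m → B^n`. -/
noncomputable def mclosureC {m n : ℕ} (f : (Fin m → Bool) → Fin n → Bool)
    (x : Fin m → BM) (i : Fin n) : Set BM :=
  if ∀ z ∈ boolRes x, f z i = false then {BM.zero}
  else if ∀ z ∈ boolRes x, f z i = true then {BM.one}
  else Set.univ

/-- The metastable closure `[f]_M : BM^m → Pow(BM^n)` of `f : B^m → B^n`. -/
noncomputable def mclosure {m n : ℕ} (f : (Fin m → Bool) → Fin n → Bool)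
    (x : Fin m → BM) : Set (Fin n → BM) :=
  { y | ∀ i, y i ∈ mclosureC f x i }

/-! ### Auxiliary development -/

/-- One-bit partial resolution. -/
def inResM1 (a b : BM) : Prop := a = b ∨ a = BM.metastable

lemma inResM1_refl (a : BM) : inResM1 a a := Or.inl rfl

lemma inResM1_trans {a b c : BM} (h1 : inResM1 a b) (h2 : inResM1 b c) : inResM1 a c := by
  rcases h1 with h1 | h1
  · rw [h1]; exact h2
  · exact Or.inr h1

lemma inResM_iff {k : ℕ} (x y : Fin k → BM) : inResM x y ↔ ∀ i, inResM1 (x i) (y i) :=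
  Iff.rfl

lemma inResM_refl {k : ℕ} (x : Fin k → BM) : inResM x x := fun i => Or.inl rfl

lemma boolRes_nonempty {k : ℕ} (x : Fin k → BM) : ∃ z, z ∈ boolRes x := by
  refine ⟨fun i => if x i = BM.one then true else false, fun i => ?_⟩
  cases h : x i <;> simp [boolRes, BM.ofBool, h]

lemma boolRes_mono {k : ℕ} {x y : Fin k → BM} (h : inResM x y) : boolRes y ⊆ boolRes x := by
  intro z hz i
  rcases h i with h' | h'
  · rcases hz i with hz' | hz'
    · left; rw [h', hz']
    · right; rw [h', hz']
  · right; exact h'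

lemma kleene_mono {k : ℕ} (f : (Fin k → Bool) → Bool) {x y : Fin k → BM}
    (h : inResM x y) : inResM1 (kleene f x) (kleene f y) := by
  unfold kleene
  by_cases h0 : ∀ z ∈ boolRes x, f z = false
  · have h0' : ∀ z ∈ boolRes y, f z = false := fun z hz => h0 z (boolRes_mono h hz)
    rw [if_pos h0, if_pos h0']; exact Or.inl rfl
  · rw [if_neg h0]
    by_cases h1 : ∀ z ∈ boolRes x, f z = true
    · obtain ⟨z, hz⟩ := boolRes_nonempty y
      have hy1 : ∀ z ∈ boolRes y, f z = true := fun z hz => h1 z (boolRes_mono h hz)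
      have hy0 : ¬ ∀ z ∈ boolRes y, f z = false := by
        intro h0'
        have t1 := hy1 z hz
        have t2 := h0' z hz
        rw [t1] at t2; exact Bool.noConfusion t2
      rw [if_pos h1, if_neg hy0, if_pos hy1]; exact Or.inl rfl
    · rw [if_neg h1]; exact Or.inr rfl

lemma Comb.eval_mono {m : ℕ} {x y : Fin m → BM} (h : inResM x y) :
    ∀ c : Comb m, inResM1 (c.eval x) (c.eval y)
  | .input i => h i
  | .const b => Or.inl rfl
  | .gate j f cs => kleene_mono f (fun t => Comb.eval_mono h (cs t))

/-- Substitution of combinational terms. -/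
def Comb.subst {j m : ℕ} : Comb j → (Fin j → Comb m) → Comb m
  | .input i, σ => σ i
  | .const b, _ => .const b
  | .gate a f cs, σ => .gate a f (fun t => (cs t).subst σ)

lemma Comb.eval_subst {j m : ℕ} (x : Fin m → BM) (σ : Fin j → Comb m) :
    ∀ c : Comb j, (c.subst σ).eval x = c.eval (fun i => (σ i).eval x)
  | .input i => rfl
  | .const b => rfl
  | .gate a f cs => by
      show kleene f _ = kleene f _
      congr 1
      funext t
      exact Comb.eval_subst x σ (cs t)

lemma regRead_simple_iff (b : BM) (p : BM × BM) :
    regRead RegType.simple b p ↔ p = (b, b) := by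
  cases b <;> simp [regRead]

lemma readRel_simple_elim {m k n : ℕ} {C : Circuit m k n} (hS : OnlySimple C)
    {s : CState m k n} {o : Fin (m + k) → BM} {ι' : Fin m → BM}
    (h : ReadRel C s o ι') : o = Fin.append s.inp s.loc ∧ ι' = s.inp := by
  obtain ⟨h1, h2⟩ := h
  constructor
  · funext i
    refine Fin.addCases (fun i => ?_) (fun j => ?_) i
    · have := h1 i
      rw [hS.1 i, regRead_simple_iff, Prod.ext_iff] at this
      rw [Fin.append_left]; exact this.1
    · obtain ⟨st', hst⟩ := h2 j
      rw [hS.2.1 j, regRead_simple_iff, Prod.ext_iff] at hst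
      rw [Fin.append_right]; exact hst.1
  · funext i
    have := h1 i
    rw [hS.1 i, regRead_simple_iff, Prod.ext_iff] at this
    exact this.2

lemma readRel_simple_intro {m k n : ℕ} {C : Circuit m k n} (hS : OnlySimple C)
    (s : CState m k n) : ReadRel C s (Fin.append s.inp s.loc) s.inp := by
  constructor
  · intro i; rw [hS.1 i, regRead_simple_iff, Fin.append_left]
  · intro j
    exact ⟨s.loc j, by rw [hS.2.1 j, regRead_simple_iff, Fin.append_right]⟩

lemma succ_simple_elim {m k n : ℕ} {C : Circuit m k n} (hS : OnlySimple C)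
    {s s' : CState m k n} (h : Succ C s s') :
    s'.inp = s.inp ∧
      inResM (evalLogic C (Fin.append s.inp s.loc)) (Fin.append s'.loc s'.out) := by
  obtain ⟨o, ι', hread, hinp, hres⟩ := h
  obtain ⟨ho, hι⟩ := readRel_simple_elim hS hread
  subst ho; subst hι
  exact ⟨hinp, hres⟩

lemma succ_simple_intro {m k n : ℕ} {C : Circuit m k n} (hS : OnlySimple C)
    (s : CState m k n) (L : Fin k → BM) (O : Fin n → BM)
    (h : inResM (evalLogic C (Fin.append s.inp s.loc)) (Fin.append L O)) :
    Succ C s ⟨s.inp, L, O⟩ :=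
  ⟨Fin.append s.inp s.loc, s.inp, readRel_simple_intro hS s, rfl, h⟩

/-- The deterministic ("pure") run of a circuit: every write is the exact
evaluation result. -/
noncomputable def pureState {m k n : ℕ} (C : Circuit m k n) (ι : Fin m → BM) :
    ℕ → CState m k n
  | 0 => initState C ι
  | t + 1 =>
      ⟨ι, fun j => evalLogic C (Fin.append ι (pureState C ι t).loc) (Fin.castAdd n j),
         fun j => evalLogic C (Fin.append ι (pureState C ι t).loc) (Fin.natAdd k j)⟩

lemma pureState_inp {m k n : ℕ} (C : Circuit m k n) (ι : Fin m → BM) (t : ℕ) :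
    (pureState C ι t).inp = ι := by
  cases t <;> rfl

lemma pureState_mem_reach {m k n : ℕ} {C : Circuit m k n} (hS : OnlySimple C)
    (ι : Fin m → BM) : ∀ t, pureState C ι t ∈ reach C t (initState C ι) := by
  intro t
  induction t with
  | zero => exact rfl
  | succ t ih =>
      refine ⟨pureState C ι t, ih, ?_⟩
      have h := succ_simple_intro hS (pureState C ι t)
        (pureState C ι (t + 1)).loc (pureState C ι (t + 1)).out ?_
      · rw [pureState_inp] at h
        have : pureState C ι (t + 1) =
            ⟨ι, (pureState C ι (t + 1)).loc, (pureState C ι (t + 1)).out⟩ := by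
          cases ht : pureState C ι (t+1) with
          | mk a b c =>
            have := pureState_inp C ι (t + 1)
            rw [ht] at this
            simp only at this
            rw [this]
        rw [this]
        exact h
      · rw [pureState_inp]
        intro i
        refine Fin.addCases (fun j => ?_) (fun j => ?_) i
        · rw [Fin.append_left]; exact Or.inl rfl
        · rw [Fin.append_right]; exact Or.inl rfl

/-- Fully unrolled combinational terms computing the pure local-register values. -/
noncomputable def unrolled {m k n : ℕ} (C : Circuit m k n) : ℕ → Fin (m + k) → Comb (m + k)
  | 0 => Fin.addCases (fun i => Comb.input (Fin.castAdd k i))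
      (fun j => Comb.const (C.init (Fin.castAdd n j)))
  | t + 1 => Fin.addCases (fun i => Comb.input (Fin.castAdd k i))
      (fun j => (C.logic (Fin.castAdd n j)).subst (unrolled C t))

lemma unrolled_eval {m k n : ℕ} (C : Circuit m k n) (ι : Fin m → BM) :
    ∀ t i, (unrolled C t i).eval (Fin.append ι (initState C ι).loc) =
      Fin.append ι (pureState C ι t).loc i := by
  intro t
  induction t with
  | zero =>
      intro i
      refine Fin.addCases (fun i => ?_) (fun j => ?_) i
      · simp only [unrolled, Fin.addCases_left]
        show Fin.append ι (initState C ι).loc (Fin.castAdd k i) = _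
        rw [Fin.append_left, Fin.append_left]
      · simp only [unrolled, Fin.addCases_right]
        show C.init (Fin.castAdd n j) = _
        rw [Fin.append_right]
        rfl
  | succ t ih =>
      intro i
      refine Fin.addCases (fun i => ?_) (fun j => ?_) i
      · simp only [unrolled, Fin.addCases_left]
        show Fin.append ι (initState C ι).loc (Fin.castAdd k i) = _
        rw [Fin.append_left, Fin.append_left]
      · simp only [unrolled, Fin.addCases_right]
        rw [Comb.eval_subst, Fin.append_right]
        show _ = (pureState C ι (t + 1)).loc j
        have : (fun i => (unrolled C t i).eval (Fin.append ι (initState C ι).loc)) =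
            Fin.append ι (pureState C ι t).loc := funext (ih)
        rw [this]
        rfl

/-- `Fun_S^r ⊆ Fun_S^1`: unroll the logic. -/
lemma funS_subset_one (m n : ℕ) (r : ℕ) (hr : 0 < r) : FunS r m n ⊆ FunS 1 m n := by
  rintro f ⟨k, C, hS, himp⟩
  refine ⟨k, ⟨fun _ => RegType.simple, fun _ => RegType.simple, fun _ => RegType.simple,
    Fin.addCases (fun j => Comb.const BM.zero)
      (fun j => (C.logic (Fin.natAdd k j)).subst (unrolled C (r - 1))), C.init⟩,
    ⟨fun _ => rfl, fun _ => rfl, fun _ => rfl⟩, ?_⟩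
  set C2 : Circuit m k n := ⟨fun _ => RegType.simple, fun _ => RegType.simple,
    fun _ => RegType.simple,
    Fin.addCases (fun j => Comb.const BM.zero)
      (fun j => (C.logic (Fin.natAdd k j)).subst (unrolled C (r - 1))), C.init⟩ with hC2
  have hS2 : OnlySimple C2 := ⟨fun _ => rfl, fun _ => rfl, fun _ => rfl⟩
  intro ι y hy
  obtain ⟨s', hs', hy'⟩ := hy
  obtain ⟨u, hu, hsucc⟩ := hs'
  have hu' : u = initState C2 ι := hu
  subst hu'
  obtain ⟨hinp, hres⟩ := succ_simple_elim hS2 hsucc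
  -- initial states of C2 and C agree on loc since init is the same
  have hloc0 : (initState C2 ι).loc = (initState C ι).loc := rfl
  -- the final output of C2 resolves the pure round-r output of C
  have hout : ∀ j : Fin n,
      inResM1 ((pureState C ι r).out j) (s'.out j) := by
    intro j
    have h1 := hres (Fin.natAdd k j)
    rw [Fin.append_right] at h1
    have h2 : evalLogic C2 (Fin.append (initState C2 ι).inp (initState C2 ι).loc)
        (Fin.natAdd k j) = (pureState C ι r).out j := by
      show (C2.logic (Fin.natAdd k j)).eval _ = _
      have hl : C2.logic (Fin.natAdd k j) =
          (C.logic (Fin.natAdd k j)).subst (unrolled C (r - 1)) := by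
        rw [hC2]
        simp only [Fin.addCases_right]
      rw [hl, Comb.eval_subst]
      have hinit : (initState C2 ι).inp = ι := rfl
      rw [hinit, hloc0]
      have : (fun i => (unrolled C (r - 1) i).eval (Fin.append ι (initState C ι).loc)) =
          Fin.append ι (pureState C ι (r - 1)).loc := funext (unrolled_eval C ι (r - 1))
      rw [this]
      obtain ⟨t, rfl⟩ : ∃ t, r = t + 1 := ⟨r - 1, (Nat.succ_pred_eq_of_pos hr).symm⟩
      simp only [Nat.add_sub_cancel]
      rfl
    rw [h2] at h1
    exact h1
  -- build the corresponding r-round run of C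
  obtain ⟨t, rfl⟩ : ∃ t, r = t + 1 := ⟨r - 1, (Nat.succ_pred_eq_of_pos hr).symm⟩
  refine himp ι ⟨⟨ι, (pureState C ι (t + 1)).loc, s'.out⟩,
    ⟨pureState C ι t, pureState_mem_reach hS ι t, ?_⟩, hy'⟩
  have := succ_simple_intro hS (pureState C ι t) (pureState C ι (t + 1)).loc s'.out ?_
  · rw [pureState_inp] at this
    exact this
  · rw [pureState_inp]
    intro i
    refine Fin.addCases (fun j => ?_) (fun j => ?_) i
    · rw [Fin.append_left]
      exact Or.inl rfl
    · rw [Fin.append_right]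
      exact hout j

/-- `Fun_S^1 ⊆ Fun_S^r`: hold the local registers, recompute the output each round. -/
lemma funS_one_subset (m n : ℕ) (r : ℕ) (hr : 0 < r) : FunS 1 m n ⊆ FunS r m n := by
  rintro f ⟨k, C, hS, himp⟩
  refine ⟨k, ⟨fun _ => RegType.simple, fun _ => RegType.simple, fun _ => RegType.simple,
    Fin.addCases (fun j => Comb.input (Fin.natAdd m j))
      (fun j => C.logic (Fin.natAdd k j)), C.init⟩,
    ⟨fun _ => rfl, fun _ => rfl, fun _ => rfl⟩, ?_⟩
  set C1 : Circuit m k n := ⟨fun _ => RegType.simple, fun _ => RegType.simple,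
    fun _ => RegType.simple,
    Fin.addCases (fun j => Comb.input (Fin.natAdd m j))
      (fun j => C.logic (Fin.natAdd k j)), C.init⟩ with hC1
  have hS1 : OnlySimple C1 := ⟨fun _ => rfl, fun _ => rfl, fun _ => rfl⟩
  intro ι y hy
  -- invariant: after t rounds of C1, input is ι and locals resolve the initial locals
  have hinv : ∀ t, ∀ s ∈ reach C1 t (initState C1 ι),
      s.inp = ι ∧ inResM (initState C ι).loc s.loc := by
    intro t
    induction t with
    | zero =>
        intro s hs
        have : s = initState C1 ι := hs
        subst this
        exact ⟨rfl, inResM_refl _⟩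
    | succ t ih =>
        rintro s ⟨u, hu, hsucc⟩
        obtain ⟨huinp, huloc⟩ := ih u hu
        obtain ⟨hinp, hres⟩ := succ_simple_elim hS1 hsucc
        refine ⟨hinp.trans huinp, fun j => ?_⟩
        have h1 := hres (Fin.castAdd n j)
        rw [Fin.append_left] at h1
        have h2 : evalLogic C1 (Fin.append u.inp u.loc) (Fin.castAdd n j) = u.loc j := by
          have hl : C1.logic (Fin.castAdd n j) = Comb.input (Fin.natAdd m j) := by
            rw [hC1]
            simp only [Fin.addCases_left]
          show (C1.logic (Fin.castAdd n j)).eval _ = _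
          rw [hl]
          show Fin.append u.inp u.loc (Fin.natAdd m j) = u.loc j
          rw [Fin.append_right]
        rw [h2] at h1
        exact inResM1_trans (huloc j) h1
  obtain ⟨t, rfl⟩ : ∃ t, r = t + 1 := ⟨r - 1, (Nat.succ_pred_eq_of_pos hr).symm⟩
  obtain ⟨s', ⟨u, hu, hsucc⟩, hy'⟩ := hy
  obtain ⟨huinp, huloc⟩ := hinv t u hu
  obtain ⟨hinp, hres⟩ := succ_simple_elim hS1 hsucc
  -- the final output resolves a 1-round evaluation of C
  have hout : ∀ j : Fin n,
      inResM1 (evalLogic C (Fin.append ι (initState C ι).loc) (Fin.natAdd k j))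
        (s'.out j) := by
    intro j
    have h1 := hres (Fin.natAdd k j)
    rw [Fin.append_right] at h1
    have h2 : evalLogic C1 (Fin.append u.inp u.loc) (Fin.natAdd k j) =
        (C.logic (Fin.natAdd k j)).eval (Fin.append ι u.loc) := by
      show (C1.logic (Fin.natAdd k j)).eval _ = _
      have hl : C1.logic (Fin.natAdd k j) = C.logic (Fin.natAdd k j) := by
        rw [hC1]
        simp only [Fin.addCases_right]
      rw [hl, huinp]
    rw [h2] at h1
    refine inResM1_trans (Comb.eval_mono ?_ (C.logic (Fin.natAdd k j))) h1
    intro i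
    refine Fin.addCases (fun i => ?_) (fun j' => ?_) i
    · rw [Fin.append_left, Fin.append_left]; exact Or.inl rfl
    · rw [Fin.append_right, Fin.append_right]; exact huloc j'
  -- build the corresponding 1-round run of C
  refine himp ι ⟨⟨ι, fun j => evalLogic C (Fin.append ι (initState C ι).loc)
      (Fin.castAdd n j), s'.out⟩, ⟨initState C ι, rfl, ?_⟩, hy'⟩
  have := succ_simple_intro hS (initState C ι)
    (fun j => evalLogic C (Fin.append ι (initState C ι).loc) (Fin.castAdd n j)) s'.out ?_
  · exact this
  · show inResM (evalLogic C (Fin.append (initState C ι).inp (initState C ι).loc)) _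
    have hii : (initState C ι).inp = ι := rfl
    rw [hii]
    intro i
    refine Fin.addCases (fun j => ?_) (fun j => ?_) i
    · rw [Fin.append_left]; exact Or.inl rfl
    · rw [Fin.append_right]; exact hout j

/-- the hierarchy for circuits with only simple registers collapses:
for all `r ∈ ℕ`, `Fun_S^r = Fun_S^1`. -/
theorem funS_hierarchy_collapses (m n : ℕ) :
    ∀ r : ℕ, 0 < r → FunS r m n = FunS 1 m n := by
  intro r hr
  exact Set.Subset.antisymm (funS_subset_one m n r hr) (funS_one_subset m n r hr)
end

section
/- The metastable closure is the minimum natural extension: let f : B^m → B^n be a Boolean function and let g : BM^m → Pow(BM^n) be any natural function with f(x) ∈ g(x) for all x ∈ B^m. Then [f]_M(x) ⊆ g(x) for all x ∈ BM^m. -/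
set_option linter.unusedVariables false

attribute [local instance] Classical.propDecidable

/-- the metastable closure is the minimum natural extension: if `g` is
natural and `f(x) ∈ g(x)` for all stable `x ∈ B^m`, then `[f]_M(x) ⊆ g(x)` for all
`x ∈ BM^m`. -/
theorem mclosure_minimal {m n : ℕ} (f : (Fin m → Bool) → Fin n → Bool)
    (g : (Fin m → BM) → Set (Fin n → BM)) (hg : IsNatural g)
    (hext : ∀ z : Fin m → Bool,
      (fun i => BM.ofBool (f z i)) ∈ g (fun i => BM.ofBool (z i))) :
    ∀ x, mclosure f x ⊆ g x := by
  obtain ⟨⟨gc, hgc, hgeq⟩, hspec⟩ := hg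
  intro x y hy
  rw [hgeq]
  intro i
  -- every complete resolution's value lies in gc i x
  have hres : ∀ z ∈ boolRes x, BM.ofBool (f z i) ∈ gc i x := by
    intro z hz
    have hin : inRes x (fun j => BM.ofBool (z j)) := by
      refine ⟨hz, ?_⟩
      intro j
      cases h : z j <;> simp [BM.ofBool, h]
    have := hspec x (fun j => BM.ofBool (z j)) hin (hext z)
    rw [hgeq] at this
    exact this i
  -- a witness resolution
  have hwit : (fun j => match x j with | BM.one => true | _ => false) ∈ boolRes x := by
    intro j
    cases h : x j <;> simp [BM.ofBool, h]
  have hyi := hy i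
  rcases hgc i x with h | h | h
  · -- gc i x = {zero}
    have hall : ∀ z ∈ boolRes x, f z i = false := by
      intro z hz
      have := hres z hz
      rw [h] at this
      cases hfz : f z i
      · rfl
      · rw [hfz] at this; simp [BM.ofBool] at this
    rw [h]
    have : mclosureC f x i = {BM.zero} := by
      simp only [mclosureC, if_pos hall]
    rw [this] at hyi
    exact hyi
  · -- gc i x = {one}
    have hall : ∀ z ∈ boolRes x, f z i = true := by
      intro z hz
      have := hres z hz
      rw [h] at this
      cases hfz : f z i
      · rw [hfz] at this; simp [BM.ofBool] at this
      · rfl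
    rw [h]
    have hnot : ¬ ∀ z ∈ boolRes x, f z i = false := by
      intro hc
      have h1 := hall _ hwit
      have h2 := hc _ hwit
      rw [h1] at h2
      exact Bool.true_eq_false.mp h2
    have : mclosureC f x i = {BM.one} := by
      simp only [mclosureC, if_neg hnot, if_pos hall]
    rw [this] at hyi
    exact hyi
  · rw [h]; trivial
end
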